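/- In the grid-like frame G, every R₁-path and every R₂-path has length at most 2; more precisely, if a R_i b, b R_i c, and c R_i d (for i ∈ {1,2}), then a contradiction follows. Moreover, the only R_i-paths of length exactly 2 are of the form U(x,y) Rᵢ S(x,y) Rᵢ T(x,y). -/
import Mathlib


inductive GW : Type where
  | P : ℤ → ℤ → GW
  | U : ℤ → ℤ → GW
  | S : ℤ → ℤ → GW
  | T : ℤ → ℤ → GW
deriving DecidableEq

def Apairs (x y : ℤ) (a b : GW) : Prop :=
  (a = .P x y ∧ b = .P (x+1) y) ∨ (a = .P x y ∧ b = .P x (y+1)) ∨ (a = .P x y ∧ b = .U x y)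

def Bpairs (x y : ℤ) (a b : GW) : Prop :=
  (a = .U x y ∧ b = .P (x+1) (y+1)) ∨ (a = .U x y ∧ b = .S x y) ∨
  (a = .S x y ∧ b = .T x y) ∨ (a = .U x y ∧ b = .T x y) ∨
  (a = .P (x+1) y ∧ b = .P (x+1) (y+1)) ∨ (a = .P x (y+1) ∧ b = .P (x+1) (y+1))

/-- R₁ of the grid-like frame G. -/
def R1 (a b : GW) : Prop :=
  ∃ x y : ℤ, (Even (x+y) ∧ Apairs x y a b) ∨ (¬ Even (x+y) ∧ Bpairs x y a b)

/-- R₂ of the grid-like frame G. -/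
def R2 (a b : GW) : Prop :=
  ∃ x y : ℤ, (Even (x+y) ∧ Bpairs x y a b) ∨ (¬ Even (x+y) ∧ Apairs x y a b)


lemma comp1 : ∀ a b c : GW, R1 a b → R1 b c → ∃ x y : ℤ, a = .U x y ∧ b = .S x y ∧ c = .T x y := by
  rintro a b c ⟨x, y, h1⟩ ⟨u, v, h2⟩
  simp only [Apairs, Bpairs, Int.even_iff] at h1 h2
  casesm* _ ∨ _, _ ∧ _ <;> subst_vars <;> simp_all <;> omega

lemma comp2 : ∀ a b c : GW, R2 a b → R2 b c → ∃ x y : ℤ, a = .U x y ∧ b = .S x y ∧ c = .T x y := by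
  rintro a b c ⟨x, y, h1⟩ ⟨u, v, h2⟩
  simp only [Apairs, Bpairs, Int.even_iff] at h1 h2
  casesm* _ ∨ _, _ ∧ _ <;> subst_vars <;> simp_all <;> omega

lemma noT1 : ∀ d : GW, ∀ x y : ℤ, ¬ R1 (.T x y) d := by
  rintro d x y ⟨u, v, h⟩
  simp only [Apairs, Bpairs] at h
  casesm* _ ∨ _, _ ∧ _ <;> simp_all

lemma noT2 : ∀ d : GW, ∀ x y : ℤ, ¬ R2 (.T x y) d := by
  rintro d x y ⟨u, v, h⟩
  simp only [Apairs, Bpairs] at h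
  casesm* _ ∨ _, _ ∧ _ <;> simp_all

theorem grid_short_paths :
    (∀ a b c d : GW, R1 a b → R1 b c → R1 c d → False) ∧
    (∀ a b c d : GW, R2 a b → R2 b c → R2 c d → False) ∧
    (∀ a b c : GW, R1 a b → R1 b c → ∃ x y : ℤ, a = .U x y ∧ b = .S x y ∧ c = .T x y) ∧
    (∀ a b c : GW, R2 a b → R2 b c → ∃ x y : ℤ, a = .U x y ∧ b = .S x y ∧ c = .T x y) := by
  refine ⟨?_, ?_, comp1, comp2⟩
  · intro a b c d h1 h2 h3
    obtain ⟨x, y, -, -, rfl⟩ := comp1 a b c h1 h2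
    exact noT1 d x y h3
  · intro a b c d h1 h2 h3
    obtain ⟨x, y, -, -, rfl⟩ := comp2 a b c h1 h2
    exact noT2 d x y h3
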